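/- #Circles satisfies the dissimilarity axiom: for points x₁, x₂ with d(x₁,x₂) = a > 0, threshold t ≥ 0, a midpoint x* with d(x*,x₁)=d(x*,x₂)=a/2, and any x ∈ X(x₁,x₂), we have #Circles({x₁,x₂,x}) ≤ #Circles({x₁,x₂,x*}). -/

import Mathlib

open Classical in
/-- The #Circles measure: the maximum cardinality of a subset `C ⊆ S` all of whose
pairwise distances exceed the threshold `t`. -/
noncomputable def nCircles {U : Type*} [MetricSpace U] (t : ℝ) (S : Finset U) : ℕ :=
  (S.powerset.filter fun C => ∀ x ∈ C, ∀ y ∈ C, x ≠ y → t < dist x y).sup Finset.card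

open Classical in
lemma le_nCircles {U : Type*} [MetricSpace U] (t : ℝ) (S C : Finset U)
    (hsub : C ⊆ S) (hval : ∀ x ∈ C, ∀ y ∈ C, x ≠ y → t < dist x y) :
    C.card ≤ nCircles t S := by
  apply Finset.le_sup (f := Finset.card)
  simp only [Finset.mem_filter, Finset.mem_powerset]
  exact ⟨hsub, hval⟩

theorem nCircles_dissimilarity {U : Type*} [MetricSpace U] [DecidableEq U]
    (t : ℝ) (ht : 0 ≤ t) (x₁ x₂ x xstar : U) (ha : 0 < dist x₁ x₂)
    (hx : dist x x₁ + dist x x₂ = dist x₁ x₂) (hx1 : x ≠ x₁) (hx2 : x ≠ x₂)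
    (hstar1 : dist xstar x₁ = dist x₁ x₂ / 2) (hstar2 : dist xstar x₂ = dist x₁ x₂ / 2) :
    nCircles t ({x₁, x₂, x} : Finset U) ≤ nCircles t ({x₁, x₂, xstar} : Finset U) := by
  classical
  have h12 : x₁ ≠ x₂ := by
    intro h; rw [h, dist_self] at ha; exact lt_irrefl _ ha
  have hd1 : 0 ≤ dist x x₁ := dist_nonneg
  have hd2 : 0 ≤ dist x x₂ := dist_nonneg
  unfold nCircles
  apply Finset.sup_le
  intro C hC
  simp only [Finset.mem_filter, Finset.mem_powerset] at hC
  obtain ⟨hsub, hval⟩ := hC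
  have hcard3 : C.card ≤ 3 := by
    calc C.card ≤ ({x₁, x₂, x} : Finset U).card := Finset.card_le_card hsub
    _ ≤ 3 := by
      apply le_trans (Finset.card_insert_le _ _)
      simp [Finset.card_insert_le]
      have := Finset.card_insert_le x₂ ({x} : Finset U); rw [Finset.card_singleton] at this; omega
  -- change goal to plain nCircles
  show C.card ≤ nCircles t ({x₁, x₂, xstar} : Finset U)
  by_cases h0 : C.card = 0
  · simp [h0]
  by_cases h3 : C.card = 3
  · -- C must be the whole set, all distances > t
    have hCS : C = ({x₁, x₂, x} : Finset U) := by
      apply Finset.eq_of_subset_of_card_le hsub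
      calc ({x₁, x₂, x} : Finset U).card ≤ 3 := by
            apply le_trans (Finset.card_insert_le _ _)
            simp
            have := Finset.card_insert_le x₂ ({x} : Finset U); rw [Finset.card_singleton] at this; omega
        _ = C.card := h3.symm
    have hm1 : x₁ ∈ C := by rw [hCS]; simp
    have hm2 : x₂ ∈ C := by rw [hCS]; simp
    have hmx : x ∈ C := by rw [hCS]; simp
    have ht1 : t < dist x x₁ := hval _ hmx _ hm1 hx1
    have ht2 : t < dist x x₂ := hval _ hmx _ hm2 hx2
    have ht12 : t < dist x₁ x₂ := hval _ hm1 _ hm2 h12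
    have hthalf : t < dist x₁ x₂ / 2 := by
      rcases le_total (dist x x₁) (dist x x₂) with h | h
      · linarith
      · linarith
    have hs1 : xstar ≠ x₁ := by
      intro h; rw [h, dist_self] at hstar1; linarith
    have hs2 : xstar ≠ x₂ := by
      intro h; rw [h, dist_self] at hstar2; linarith
    have hvalid : ∀ u ∈ ({x₁, x₂, xstar} : Finset U), ∀ v ∈ ({x₁, x₂, xstar} : Finset U),
        u ≠ v → t < dist u v := by
      intro u hu v hv huv
      simp only [Finset.mem_insert, Finset.mem_singleton] at hu hv
      rcases hu with rfl | rfl | rfl <;> rcases hv with rfl | rfl | rfl <;>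
        first
        | exact absurd rfl huv
        | (rw [dist_comm]; first | exact ht12 | (rw [hstar1]; exact hthalf) | (rw [hstar2]; exact hthalf))
        | exact ht12
        | (rw [hstar1]; exact hthalf)
        | (rw [hstar2]; exact hthalf)
    have hcardR : ({x₁, x₂, xstar} : Finset U).card = 3 := by
      rw [Finset.card_insert_of_notMem, Finset.card_insert_of_notMem] <;>
        simp [h12, hs1.symm, hs2.symm]
    rw [h3, ← hcardR]
    exact le_nCircles t _ _ (le_refl _) hvalid
  by_cases h1 : C.card = 1
  · have : ({x₁} : Finset U).card ≤ nCircles t ({x₁, x₂, xstar} : Finset U) := by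
      apply le_nCircles
      · intro y hy; simp at hy; simp [hy]
      · intro a ha' b hb hab; simp at ha' hb; subst ha'; subst hb; exact absurd rfl hab
    simpa [h1] using this
  -- card = 2 case
  have h2 : C.card = 2 := by omega
  obtain ⟨u, v, huv, hCuv⟩ := Finset.card_eq_two.mp h2
  have hu : u ∈ ({x₁, x₂, x} : Finset U) := hsub (by simp [hCuv])
  have hv : v ∈ ({x₁, x₂, x} : Finset U) := hsub (by simp [hCuv])
  have htuv : t < dist u v := hval u (by simp [hCuv]) v (by simp [hCuv]) huv
  have hle : dist u v ≤ dist x₁ x₂ := by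
    simp only [Finset.mem_insert, Finset.mem_singleton] at hu hv
    have e1 : dist x₁ x = dist x x₁ := dist_comm _ _
    have e2 : dist x₂ x = dist x x₂ := dist_comm _ _
    have e3 : dist x₂ x₁ = dist x₁ x₂ := dist_comm _ _
    have hd : dist x x₁ ≤ dist x₁ x₂ ∧ dist x x₂ ≤ dist x₁ x₂ := ⟨by linarith, by linarith⟩
    rcases hu with rfl | rfl | rfl <;> rcases hv with rfl | rfl | rfl <;>
      simp_all <;> linarith
  have hta : t < dist x₁ x₂ := lt_of_lt_of_le htuv hle
  have : ({x₁, x₂} : Finset U).card ≤ nCircles t ({x₁, x₂, xstar} : Finset U) := by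
    apply le_nCircles
    · intro y hy; simp at hy; rcases hy with rfl | rfl <;> simp
    · intro a ha' b hb hab
      simp only [Finset.mem_insert, Finset.mem_singleton] at ha' hb
      rcases ha' with rfl | rfl <;> rcases hb with rfl | rfl <;>
        first
        | exact absurd rfl hab
        | exact hta
        | (rw [dist_comm]; exact hta)
  have hc2 : ({x₁, x₂} : Finset U).card = 2 := by
    rw [Finset.card_insert_of_notMem] <;> simp [h12]
  omega
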